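/- Let CP_{(1,1)}(n) denote the generating function (in q) for cylindric partitions with profile (1,1) in which each of the two constituent partitions has at most n parts. Then CP_{(1,1)}(n) = (-q;q^2)_n / (q;q)_{2n}. -/

import Mathlib

set_option linter.unusedSectionVars false

open PowerSeries Finset

namespace CylAux


def w (S : Finset ℕ) : ℕ := ∑ i ∈ S, (2 * i + 1)

def subFinset (n N : ℕ) : Finset (Finset ℕ) :=
  (range n).powerset.filter fun S => w S = N

def parFinset (m N : ℕ) : Finset (Fin m → ℕ) :=
  (Fintype.piFinset fun _ : Fin m => range (N + 1)).filter
    fun v => (∀ i j : Fin m, i ≤ j → v j ≤ v i) ∧ ∑ i, v i = N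

def QFinset (n N : ℕ) : Finset (Finset ℕ × (Fin (2 * n) → ℕ)) :=
  ((range n).powerset ×ˢ Fintype.piFinset fun _ : Fin (2 * n) => range (N + 1)).filter
    fun p => (∀ i j : Fin (2 * n), i ≤ j → p.2 j ≤ p.2 i) ∧ w p.1 + ∑ i, p.2 i = N

lemma mem_subFinset {n N : ℕ} {S : Finset ℕ} :
    S ∈ subFinset n N ↔ S ⊆ range n ∧ w S = N := by
  simp [subFinset]

lemma mem_parFinset {m N : ℕ} {v : Fin m → ℕ} :
    v ∈ parFinset m N ↔ (∀ i j : Fin m, i ≤ j → v j ≤ v i) ∧ ∑ i, v i = N := by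
  constructor
  · intro h; exact (mem_filter.mp h).2
  · intro h
    refine mem_filter.mpr ⟨Fintype.mem_piFinset.mpr fun i => ?_, h⟩
    rw [mem_range, Nat.lt_succ_iff, ← h.2]
    exact Finset.single_le_sum (fun i _ => Nat.zero_le _) (mem_univ i)

lemma mem_QFinset {n N : ℕ} {p : Finset ℕ × (Fin (2 * n) → ℕ)} :
    p ∈ QFinset n N ↔ p.1 ⊆ range n ∧
      (∀ i j : Fin (2 * n), i ≤ j → p.2 j ≤ p.2 i) ∧ w p.1 + ∑ i, p.2 i = N := by
  constructor
  · intro h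
    obtain ⟨h1, h2⟩ := mem_filter.mp h
    exact ⟨mem_powerset.mp (mem_product.mp h1).1, h2⟩
  · rintro ⟨hS, hd, hs⟩
    refine mem_filter.mpr ⟨mem_product.mpr ⟨mem_powerset.mpr hS,
      Fintype.mem_piFinset.mpr fun i => ?_⟩, hd, hs⟩
    rw [mem_range, Nat.lt_succ_iff]
    calc p.2 i ≤ ∑ j, p.2 j :=
          Finset.single_le_sum (fun j _ => Nat.zero_le _) (mem_univ i)
    _ ≤ N := by omega

lemma QFinset_card (n N : ℕ) :
    (QFinset n N).card =
      ∑ p ∈ Finset.HasAntidiagonal.antidiagonal N, (subFinset n p.1).card * (parFinset (2 * n) p.2).card := by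
  rw [Finset.card_eq_sum_card_fiberwise
    (f := fun p : Finset ℕ × (Fin (2 * n) → ℕ) => (w p.1, ∑ i, p.2 i))
    (t := Finset.HasAntidiagonal.antidiagonal N)
    (fun p hp => by rw [Finset.mem_coe, Finset.HasAntidiagonal.mem_antidiagonal]; exact (mem_QFinset.mp hp).2.2)]
  refine Finset.sum_congr rfl fun p hp => ?_
  obtain ⟨p1, p2⟩ := p
  rw [Finset.HasAntidiagonal.mem_antidiagonal] at hp
  rw [← Finset.card_product]
  congr 1
  ext x
  simp only [Finset.mem_filter, Finset.mem_product, Prod.mk.injEq]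
  constructor
  · rintro ⟨hx, e1, e2⟩
    obtain ⟨h1, h2, h3⟩ := mem_QFinset.mp hx
    exact ⟨mem_subFinset.mpr ⟨h1, e1⟩, mem_parFinset.mpr ⟨h2, e2⟩⟩
  · rintro ⟨hx1, hx2⟩
    obtain ⟨h1, e1⟩ := mem_subFinset.mp hx1
    obtain ⟨h2, e2⟩ := mem_parFinset.mp hx2
    exact ⟨mem_QFinset.mpr ⟨h1, h2, by omega⟩, e1, e2⟩


lemma subFinset_card_rec (n N : ℕ) :
    (subFinset (n+1) N).card =
      (subFinset n N).card + if 2*n+1 ≤ N then (subFinset n (N - (2*n+1))).card else 0 := by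
  classical
  rw [← Finset.card_filter_add_card_filter_not
        (s := subFinset (n+1) N) (p := fun S => n ∉ S)]
  congr 1
  · -- n ∉ S piece
    congr 1
    ext S
    simp only [Finset.mem_filter, mem_subFinset]
    constructor
    · rintro ⟨⟨h1, h2⟩, h3⟩
      refine ⟨fun x hx => ?_, h2⟩
      have := mem_range.mp (h1 hx)
      have : x ≠ n := fun e => h3 (e ▸ hx)
      rw [mem_range]; omega
    · rintro ⟨h1, h2⟩
      refine ⟨⟨fun x hx => ?_, h2⟩, fun hn => by simpa using mem_range.mp (h1 hn)⟩
      have := mem_range.mp (h1 hx); rw [mem_range]; omega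
  · -- n ∈ S piece
    by_cases hc : 2*n+1 ≤ N
    · rw [if_pos hc]
      apply Finset.card_nbij' (i := fun S => S.erase n) (j := fun S => insert n S)
      · intro S hS
        simp only [Finset.mem_coe, Finset.mem_filter, mem_subFinset, not_not] at hS
        obtain ⟨⟨h1, h2⟩, h3⟩ := hS
        refine mem_subFinset.mpr ⟨fun x hx => ?_, ?_⟩
        · obtain ⟨hxn, hxS⟩ := Finset.mem_erase.mp hx
          have := mem_range.mp (h1 hxS); rw [mem_range]; omega
        · have : w (insert n (S.erase n)) = 2*n+1 + w (S.erase n) :=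
            Finset.sum_insert (Finset.notMem_erase _ _)
          rw [Finset.insert_erase h3] at this
          beta_reduce; omega
      · intro S hS
        obtain ⟨h1, h2⟩ := mem_subFinset.mp hS
        have hn : n ∉ S := fun hn => by simpa using mem_range.mp (h1 hn)
        simp only [Finset.mem_coe, Finset.mem_filter, mem_subFinset, not_not]
        refine ⟨⟨fun x hx => ?_, ?_⟩, Finset.mem_insert_self _ _⟩
        · rcases Finset.mem_insert.mp hx with he | hx
          · rw [mem_range]; omega
          · have := mem_range.mp (h1 hx); rw [mem_range]; omega
        · rw [show w (insert n S) = 2*n+1 + w S from Finset.sum_insert hn]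
          omega
      · intro S hS
        simp only [Finset.mem_coe, Finset.mem_filter, not_not] at hS
        exact Finset.insert_erase hS.2
      · intro S hS
        obtain ⟨h1, _⟩ := mem_subFinset.mp hS
        exact Finset.erase_insert (fun hn => by simpa using mem_range.mp (h1 hn))
    · rw [if_neg hc]
      rw [Finset.card_eq_zero, Finset.filter_eq_empty_iff]
      rintro S hS hn
      rw [not_not] at hn
      obtain ⟨h1, h2⟩ := mem_subFinset.mp hS
      have : 2*n+1 ≤ w S := Finset.single_le_sum (f := fun i => 2*i+1)
        (fun i _ => Nat.zero_le _) hn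
      omega

lemma A_eq (n : ℕ) :
    (∏ j ∈ range n, (1 + (X : ℚ⟦X⟧) ^ (2*j+1))) = mk fun N => ((subFinset n N).card : ℚ) := by
  induction n with
  | zero =>
    ext N
    rw [Finset.prod_range_zero, coeff_mk, coeff_one]
    simp only [subFinset, Finset.range_zero, Finset.powerset_empty, Finset.filter_singleton]
    have hw : w (∅ : Finset ℕ) = 0 := rfl
    by_cases hN : N = 0
    · subst hN; rw [if_pos rfl, if_pos hw]; simp
    · rw [if_neg hN, if_neg (by omega : ¬ w (∅ : Finset ℕ) = N)]; simp
  | succ n ih =>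
    rw [Finset.prod_range_succ, ih]
    ext N
    rw [mul_add, mul_one, map_add, coeff_mk, PowerSeries.coeff_mul_X_pow', coeff_mk, coeff_mk,
      subFinset_card_rec]
    push_cast [apply_ite (fun k : ℕ => (k : ℚ))]
    split_ifs with h
    · rfl
    · ring


lemma parFinset_card_rec (m N : ℕ) :
    (parFinset (m+1) N).card =
      (parFinset m N).card + if m+1 ≤ N then (parFinset (m+1) (N - (m+1))).card else 0 := by
  classical
  rw [← Finset.card_filter_add_card_filter_not
        (s := parFinset (m+1) N) (p := fun v => v (Fin.last m) = 0)]
  congr 1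
  · -- last coordinate zero
    apply Finset.card_nbij' (i := fun v => v ∘ Fin.castSucc) (j := fun v => Fin.snoc v 0)
    · intro v hv
      obtain ⟨hv, hlast⟩ := mem_filter.mp hv
      obtain ⟨hd, hs⟩ := mem_parFinset.mp hv
      refine mem_parFinset.mpr ⟨fun i j hij => hd _ _ (by simpa using hij), ?_⟩
      have h2 := Fin.sum_univ_castSucc (f := v)
      rw [hlast, add_zero] at h2
      show ∑ i : Fin m, v (Fin.castSucc i) = N
      rw [← h2]; exact hs
    · intro v hv
      obtain ⟨hd, hs⟩ := mem_parFinset.mp hv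
      refine mem_filter.mpr ⟨mem_parFinset.mpr ⟨?_, ?_⟩, Fin.snoc_last _ _⟩
      · intro i j hij
        rcases Fin.eq_castSucc_or_eq_last j with ⟨j', rfl⟩ | rfl
        · rcases Fin.eq_castSucc_or_eq_last i with ⟨i', rfl⟩ | rfl
          · beta_reduce; rw [Fin.snoc_castSucc, Fin.snoc_castSucc]
            exact hd _ _ (by simpa using hij)
          · exact absurd (lt_of_le_of_lt hij (Fin.castSucc_lt_last j')) (lt_irrefl _)
        · beta_reduce; rw [Fin.snoc_last]; exact Nat.zero_le _
      · rw [Fin.sum_univ_castSucc]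
        simp only [Fin.snoc_castSucc, Fin.snoc_last]
        omega
    · intro v hv
      obtain ⟨hv, hlast⟩ := mem_filter.mp hv
      funext k
      refine Fin.lastCases ?_ (fun k' => ?_) k
      · beta_reduce; rw [Fin.snoc_last, hlast]
      · beta_reduce; rw [Fin.snoc_castSucc]; rfl
    · intro v hv
      funext k
      beta_reduce; rw [Function.comp_apply, Fin.snoc_castSucc]
  · -- last coordinate nonzero
    by_cases hc : m+1 ≤ N
    · rw [if_pos hc]
      have key : ∀ v : Fin (m+1) → ℕ, (∀ i j : Fin (m+1), i ≤ j → v j ≤ v i) →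
          v (Fin.last m) ≠ 0 → ∀ k, 1 ≤ v k := by
        intro v hd hl k
        have := hd k (Fin.last m) (Fin.le_last k)
        omega
      apply Finset.card_nbij' (i := fun v k => v k - 1) (j := fun v k => v k + 1)
      · intro v hv
        obtain ⟨hv, hlast⟩ := mem_filter.mp hv
        obtain ⟨hd, hs⟩ := mem_parFinset.mp hv
        have h1 := key v hd hlast
        refine mem_parFinset.mpr ⟨fun i j hij => ?_, ?_⟩
        · show v j - 1 ≤ v i - 1
          have := hd i j hij; omega
        · show ∑ k : Fin (m+1), (v k - 1) = N - (m+1)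
          have h2 : ∑ k : Fin (m+1), (v k - 1) + ∑ _k : Fin (m+1), 1
              = ∑ k : Fin (m+1), v k := by
            rw [← Finset.sum_add_distrib]
            exact Finset.sum_congr rfl fun k _ => by have := h1 k; omega
          have hcard : ∑ _k : Fin (m+1), (1:ℕ) = m + 1 := by simp
          omega
      · intro v hv
        obtain ⟨hd, hs⟩ := mem_parFinset.mp hv
        refine mem_filter.mpr ⟨mem_parFinset.mpr ⟨fun i j hij => ?_, ?_⟩, ?_⟩
        · show v j + 1 ≤ v i + 1
          have := hd i j hij; omega
        · show ∑ k : Fin (m+1), (v k + 1) = N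
          rw [Finset.sum_add_distrib]
          have hcard : ∑ _k : Fin (m+1), (1:ℕ) = m + 1 := by simp
          omega
        · show ¬ (v (Fin.last m) + 1 = 0)
          omega
      · intro v hv
        obtain ⟨hv, hlast⟩ := mem_filter.mp hv
        obtain ⟨hd, _⟩ := mem_parFinset.mp hv
        have h1 := key v hd hlast
        funext k; show v k - 1 + 1 = v k
        have := h1 k; omega
      · intro v _
        funext k; show v k + 1 - 1 = v k
        omega
    · rw [if_neg hc]
      rw [Finset.card_eq_zero, Finset.filter_eq_empty_iff]
      intro v hv hlast
      obtain ⟨hd, hs⟩ := mem_parFinset.mp hv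
      have h1 : ∀ k, 1 ≤ v k := by
        intro k; have := hd k (Fin.last m) (Fin.le_last k); omega
      have h2 : ∑ _k : Fin (m+1), (1:ℕ) ≤ ∑ k : Fin (m+1), v k :=
        Finset.sum_le_sum fun k _ => h1 k
      have hcard : ∑ _k : Fin (m+1), (1:ℕ) = m + 1 := by simp
      omega


lemma parFinset_zero (N : ℕ) : (parFinset 0 N).card = if N = 0 then 1 else 0 := by
  classical
  by_cases hN : N = 0
  · subst hN
    rw [if_pos rfl]
    rw [show parFinset 0 0 = Fintype.piFinset fun _ : Fin 0 => range 1 from ?_]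
    · rw [Fintype.card_piFinset]; simp
    · rw [parFinset, Finset.filter_true_of_mem]
      intro v _
      exact ⟨fun i => i.elim0, by simp⟩
  · rw [if_neg hN, Finset.card_eq_zero, parFinset, Finset.filter_eq_empty_iff]
    intro v _
    rintro ⟨-, hs⟩
    simp at hs
    omega

lemma par_mk_rec (m : ℕ) :
    (PowerSeries.mk fun N => ((parFinset (m+1) N).card : ℚ)) * (1 - X ^ (m+1)) =
      PowerSeries.mk fun N => ((parFinset m N).card : ℚ) := by
  have h : (PowerSeries.mk fun N => ((parFinset (m+1) N).card : ℚ)) =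
          (PowerSeries.mk fun N => ((parFinset m N).card : ℚ)) +
        (PowerSeries.mk fun N => ((parFinset (m+1) N).card : ℚ)) * X ^ (m+1) := by
    ext N
    rw [map_add, coeff_mk, coeff_mk, PowerSeries.coeff_mul_X_pow', parFinset_card_rec]
    push_cast [apply_ite (fun k : ℕ => (k : ℚ))]
    split_ifs with hc
    · rw [coeff_mk]
    · ring
  linear_combination h

lemma B_inv (m : ℕ) :
    (PowerSeries.mk fun N => ((parFinset m N).card : ℚ)) * ∏ j ∈ range m, (1 - X ^ (j+1)) = 1 := by
  induction m with
  | zero =>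
    rw [Finset.prod_range_zero, mul_one]
    ext N
    rw [coeff_mk, coeff_one, parFinset_zero]
    split_ifs <;> simp
  | succ m ih =>
    calc (PowerSeries.mk fun N => ((parFinset (m+1) N).card : ℚ)) * ∏ j ∈ range (m+1), (1 - X ^ (j+1))
        = ((PowerSeries.mk fun N => ((parFinset (m+1) N).card : ℚ)) * (1 - X ^ (m+1))) *
            ∏ j ∈ range m, (1 - X ^ (j+1)) := by
          rw [Finset.prod_range_succ]; ring
      _ = (PowerSeries.mk fun N => ((parFinset m N).card : ℚ)) * ∏ j ∈ range m, (1 - X ^ (j+1)) := by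
          rw [par_mk_rec]
      _ = 1 := ih

lemma constantCoeff_B (m : ℕ) :
    (constantCoeff : ℚ⟦X⟧ →+* ℚ) (∏ j ∈ range m, (1 - X ^ (j+1))) = 1 := by
  rw [map_prod]
  rw [Finset.prod_congr rfl fun j _ => ?_]
  · exact Finset.prod_const_one
  · rw [map_sub, map_one, map_pow, constantCoeff_X, zero_pow (Nat.succ_ne_zero j), sub_zero]

lemma B_inv' (m : ℕ) :
    (∏ j ∈ range m, (1 - (X : ℚ⟦X⟧) ^ (j+1)))⁻¹ = PowerSeries.mk fun N => ((parFinset m N).card : ℚ) := by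
  symm
  rw [PowerSeries.eq_inv_iff_mul_eq_one]
  · exact B_inv m
  · rw [constantCoeff_B]; exact one_ne_zero


def cylSet (n N : ℕ) : Set ((ℕ → ℕ) × (ℕ → ℕ)) :=
  {ab | (∀ i, ab.1 (i + 1) ≤ ab.1 i) ∧ (∀ i, ab.2 (i + 1) ≤ ab.2 i) ∧
      (∀ i, ab.2 (i + 1) ≤ ab.1 i) ∧ (∀ i, ab.1 (i + 1) ≤ ab.2 i) ∧
      (∀ i, n ≤ i → ab.1 i = 0) ∧ (∀ i, n ≤ i → ab.2 i = 0) ∧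
      (∑ i ∈ Finset.range n, (ab.1 i + ab.2 i)) = N}

/-! ### auxiliary counting function -/

def addT (S : Finset ℕ) (j : ℕ) : ℕ := (S.filter fun i => j ≤ 2 * i).card

lemma addT_succ_le (S : Finset ℕ) (j : ℕ) : addT S (j+1) ≤ addT S j := by
  apply Finset.card_le_card
  intro x hx
  rw [Finset.mem_filter] at hx ⊢
  exact ⟨hx.1, by omega⟩

lemma addT_antitone (S : Finset ℕ) : Antitone (addT S) :=
  antitone_nat_of_succ_le (addT_succ_le S)

lemma addT_step (S : Finset ℕ) (j : ℕ) :
    addT S j = addT S (j+1) + (if j % 2 = 0 ∧ j / 2 ∈ S then 1 else 0) := by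
  classical
  have h1 : S.filter (fun i => j ≤ 2 * i) =
      S.filter (fun i => j + 1 ≤ 2 * i) ∪ S.filter (fun i => 2 * i = j) := by
    ext x
    simp only [Finset.mem_filter, Finset.mem_union]
    constructor
    · rintro ⟨hx, hj⟩
      rcases (by omega : j + 1 ≤ 2 * x ∨ 2 * x = j) with h | h
      · exact Or.inl ⟨hx, h⟩
      · exact Or.inr ⟨hx, h⟩
    · rintro (⟨hx, h⟩ | ⟨hx, h⟩) <;> exact ⟨hx, by omega⟩
  have h2 : Disjoint (S.filter (fun i => j + 1 ≤ 2 * i)) (S.filter (fun i => 2 * i = j)) := by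
    rw [Finset.disjoint_left]
    intro x hx1 hx2
    rw [Finset.mem_filter] at hx1 hx2
    omega
  rw [addT, h1, Finset.card_union_of_disjoint h2]
  congr 1
  by_cases hc : j % 2 = 0 ∧ j / 2 ∈ S
  · rw [if_pos hc]
    rw [show S.filter (fun i => 2 * i = j) = {j / 2} from ?_]
    · exact Finset.card_singleton _
    · ext x
      simp only [Finset.mem_filter, Finset.mem_singleton]
      constructor
      · rintro ⟨_, h⟩; omega
      · rintro rfl; exact ⟨hc.2, by omega⟩
  · rw [if_neg hc]
    rw [Finset.card_eq_zero, Finset.filter_eq_empty_iff]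
    intro x hx he
    refine hc ⟨by omega, ?_⟩
    have hx2 : j / 2 = x := by omega
    rw [hx2]; exact hx

lemma addT_eq_zero {S : Finset ℕ} {n j : ℕ} (hS : S ⊆ range n) (hj : 2 * n ≤ j) :
    addT S j = 0 := by
  rw [addT, Finset.card_eq_zero, Finset.filter_eq_empty_iff]
  intro x hx
  have := mem_range.mp (hS hx)
  omega

lemma sum_range_two_mul (n : ℕ) (f : ℕ → ℕ) :
    ∑ k ∈ range (2 * n), f k = ∑ i ∈ range n, (f (2 * i) + f (2 * i + 1)) := by
  induction n with
  | zero => simp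
  | succ n ih =>
    rw [show 2 * (n + 1) = 2 * n + 1 + 1 from by ring, Finset.sum_range_succ,
      Finset.sum_range_succ, Finset.sum_range_succ, ih]
    omega

lemma sum_addT {S : Finset ℕ} {n : ℕ} (hS : S ⊆ range n) :
    ∑ j ∈ range (2 * n), addT S j = w S := by
  unfold addT w
  rw [Finset.sum_congr rfl fun j _ => Finset.card_filter _ _]
  rw [Finset.sum_comm]
  refine Finset.sum_congr rfl fun i hi => ?_
  have hin : i < n := mem_range.mp (hS hi)
  rw [← Finset.card_filter]
  rw [show (range (2 * n)).filter (fun j => j ≤ 2 * i) = range (2 * i + 1) from ?_]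
  · exact Finset.card_range _
  · ext x
    simp only [Finset.mem_filter, Finset.mem_range]
    omega

/-! ### the forward map -/

def cseq (ab : (ℕ → ℕ) × (ℕ → ℕ)) (k : ℕ) : ℕ :=
  if k % 2 = 0 then max (ab.1 (k / 2)) (ab.2 (k / 2)) else min (ab.1 (k / 2)) (ab.2 (k / 2))

lemma cseq_two_mul (ab : (ℕ → ℕ) × (ℕ → ℕ)) (i : ℕ) :
    cseq ab (2 * i) = max (ab.1 i) (ab.2 i) := by
  have h1 : (2 * i) % 2 = 0 := by omega
  have h2 : (2 * i) / 2 = i := by omega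
  simp [cseq, h1, h2]

lemma cseq_two_mul_add_one (ab : (ℕ → ℕ) × (ℕ → ℕ)) (i : ℕ) :
    cseq ab (2 * i + 1) = min (ab.1 i) (ab.2 i) := by
  have h1 : ¬ ((2 * i + 1) % 2 = 0) := by omega
  have h2 : (2 * i + 1) / 2 = i := by omega
  simp [cseq, h1, h2]

def Sof (n : ℕ) (ab : (ℕ → ℕ) × (ℕ → ℕ)) : Finset ℕ :=
  (range n).filter fun i => ab.1 i < ab.2 i

lemma mem_Sof {n i : ℕ} {ab : (ℕ → ℕ) × (ℕ → ℕ)} :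
    i ∈ Sof n ab ↔ i < n ∧ ab.1 i < ab.2 i := by
  simp [Sof]

lemma Sof_subset {n : ℕ} {ab : (ℕ → ℕ) × (ℕ → ℕ)} : Sof n ab ⊆ range n :=
  Finset.filter_subset _ _

def vof (n : ℕ) (ab : (ℕ → ℕ) × (ℕ → ℕ)) : Fin (2 * n) → ℕ :=
  fun j => cseq ab j - addT (Sof n ab) j

def cof (n : ℕ) (S : Finset ℕ) (v : Fin (2 * n) → ℕ) (k : ℕ) : ℕ :=
  if h : k < 2 * n then v ⟨k, h⟩ + addT S k else 0

def abof (n : ℕ) (S : Finset ℕ) (v : Fin (2 * n) → ℕ) : (ℕ → ℕ) × (ℕ → ℕ) :=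
  (fun i => if i ∈ S then cof n S v (2 * i + 1) else cof n S v (2 * i),
   fun i => if i ∈ S then cof n S v (2 * i) else cof n S v (2 * i + 1))

/-! ### properties under cylindric hypotheses -/

section forward
variable {n N : ℕ} {ab : (ℕ → ℕ) × (ℕ → ℕ)} (h : ab ∈ cylSet n N)

include h

lemma cseq_succ_le (k : ℕ) : cseq ab (k + 1) ≤ cseq ab k := by
  obtain ⟨h1, h2, h3, h4, -, -, -⟩ := h
  obtain ⟨i, hi | hi⟩ : ∃ i, k = 2 * i ∨ k = 2 * i + 1 := ⟨k / 2, by omega⟩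
  · rw [show k + 1 = 2 * i + 1 from by omega, hi, cseq_two_mul, cseq_two_mul_add_one]
    exact min_le_max
  · rw [show k + 1 = 2 * (i + 1) from by omega, hi, cseq_two_mul, cseq_two_mul_add_one]
    exact max_le (le_min (h1 i) (h4 i)) (le_min (h3 i) (h2 i))

lemma cseq_strict {i : ℕ} (hi : ab.1 i < ab.2 i) :
    cseq ab (2 * i + 1) < cseq ab (2 * i) := by
  rw [cseq_two_mul, cseq_two_mul_add_one, max_eq_right hi.le, min_eq_left hi.le]
  exact hi

lemma cseq_eq_zero (k : ℕ) (hk : 2 * n ≤ k) : cseq ab k = 0 := by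
  obtain ⟨-, -, -, -, h5, h6, -⟩ := h
  have e1 : ab.1 (k / 2) = 0 := h5 _ (by omega)
  have e2 : ab.2 (k / 2) = 0 := h6 _ (by omega)
  unfold cseq
  split_ifs <;> simp [e1, e2]

lemma sum_cseq : ∑ k ∈ range (2 * n), cseq ab k = N := by
  obtain ⟨-, -, -, -, -, -, h7⟩ := h
  rw [sum_range_two_mul]
  rw [Finset.sum_congr rfl fun i _ => ?_]
  · exact h7
  · rw [cseq_two_mul, cseq_two_mul_add_one]
    omega

lemma addT_le_cseq : ∀ j, addT (Sof n ab) j ≤ cseq ab j := by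
  suffices H : ∀ d j, 2 * n ≤ j + d → addT (Sof n ab) j ≤ cseq ab j by
    intro j; exact H (2 * n) j (by omega)
  intro d
  induction d with
  | zero =>
    intro j hj
    rw [addT_eq_zero Sof_subset (by omega)]
    exact Nat.zero_le _
  | succ d ih =>
    intro j hj
    by_cases h2 : 2 * n ≤ j
    · rw [addT_eq_zero Sof_subset h2]; exact Nat.zero_le _
    · have hstep := addT_step (Sof n ab) j
      have hc := cseq_succ_le h j
      have ih' := ih (j + 1) (by omega)
      by_cases he : j % 2 = 0 ∧ j / 2 ∈ Sof n ab
      · have hi := mem_Sof.mp he.2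
        have hst : cseq ab (2 * (j / 2) + 1) < cseq ab (2 * (j / 2)) := cseq_strict h hi.2
        rw [show 2 * (j / 2) = j from by omega] at hst
        rw [hstep, if_pos he]
        omega
      · rw [hstep, if_neg he]
        omega

lemma forward_mem : (Sof n ab, vof n ab) ∈ QFinset n N := by
  refine mem_QFinset.mpr ⟨Sof_subset, ?_, ?_⟩
  · intro i j hij
    have hg : ∀ k, cseq ab (k + 1) - addT (Sof n ab) (k + 1) ≤
        cseq ab k - addT (Sof n ab) k := by
      intro k
      have h1 := cseq_succ_le h k
      have h2 := addT_step (Sof n ab) k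
      have h3 := addT_le_cseq h (k + 1)
      by_cases he : k % 2 = 0 ∧ k / 2 ∈ Sof n ab
      · have hi := mem_Sof.mp he.2
        have hst : cseq ab (2 * (k / 2) + 1) < cseq ab (2 * (k / 2)) := cseq_strict h hi.2
        rw [show 2 * (k / 2) = k from by omega] at hst
        rw [h2, if_pos he] at *
        omega
      · rw [h2, if_neg he] at *
        omega
    have mono : Antitone (fun k => cseq ab k - addT (Sof n ab) k) :=
      antitone_nat_of_succ_le hg
    exact mono (show (i : ℕ) ≤ (j : ℕ) from hij)
  · have hv : ∑ j : Fin (2 * n), vof n ab j =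
        ∑ k ∈ range (2 * n), (cseq ab k - addT (Sof n ab) k) := by
      rw [← Fin.sum_univ_eq_sum_range]
      rfl
    have key : ∑ k ∈ range (2 * n), (cseq ab k - addT (Sof n ab) k) +
        ∑ k ∈ range (2 * n), addT (Sof n ab) k = N := by
      rw [← Finset.sum_add_distrib]
      rw [Finset.sum_congr rfl fun k _ => Nat.sub_add_cancel (addT_le_cseq h k)]
      exact sum_cseq h
    have hw := sum_addT (Sof_subset (n := n) (ab := ab))
    show w (Sof n ab) + ∑ j : Fin (2 * n), vof n ab j = N
    rw [hv]
    omega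

end forward

/-! ### backward map properties -/

section backward
variable {n N : ℕ}

lemma cof_antitone {S : Finset ℕ} {v : Fin (2 * n) → ℕ}
    (hd : ∀ i j : Fin (2 * n), i ≤ j → v j ≤ v i) :
    ∀ k l, k ≤ l → cof n S v l ≤ cof n S v k := by
  intro k l hkl
  by_cases hl : l < 2 * n
  · have hk : k < 2 * n := by omega
    rw [cof, cof, dif_pos hl, dif_pos hk]
    exact add_le_add (hd ⟨k, hk⟩ ⟨l, hl⟩ hkl) (addT_antitone S hkl)
  · rw [cof, dif_neg hl]
    exact Nat.zero_le _

lemma cof_strict {S : Finset ℕ} {v : Fin (2 * n) → ℕ}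
    (hd : ∀ i j : Fin (2 * n), i ≤ j → v j ≤ v i) (hS : S ⊆ range n) {i : ℕ} (hi : i ∈ S) :
    cof n S v (2 * i + 1) < cof n S v (2 * i) := by
  have hin : i < n := mem_range.mp (hS hi)
  have h1 : 2 * i + 1 < 2 * n := by omega
  have h2 : 2 * i < 2 * n := by omega
  rw [cof, cof, dif_pos h1, dif_pos h2]
  have hstep := addT_step S (2 * i)
  rw [if_pos ⟨by omega, by rw [show 2 * i / 2 = i from by omega]; exact hi⟩] at hstep
  have hv : v ⟨2 * i + 1, h1⟩ ≤ v ⟨2 * i, h2⟩ := hd _ _ (by simp)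
  omega

lemma backward_mem {p : Finset ℕ × (Fin (2 * n) → ℕ)} (hp : p ∈ QFinset n N) :
    abof n p.1 p.2 ∈ cylSet n N := by
  obtain ⟨hS, hd, hsum⟩ := mem_QFinset.mp hp
  have hmono := cof_antitone (S := p.1) hd
  have hub : ∀ i, (abof n p.1 p.2).1 i ≤ cof n p.1 p.2 (2 * i) ∧
      (abof n p.1 p.2).2 i ≤ cof n p.1 p.2 (2 * i) := by
    intro i
    unfold abof
    constructor <;> dsimp only <;> split_ifs <;>
      first
        | exact le_refl _
        | exact hmono _ _ (by omega)
  have hlb : ∀ i, cof n p.1 p.2 (2 * i + 1) ≤ (abof n p.1 p.2).1 i ∧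
      cof n p.1 p.2 (2 * i + 1) ≤ (abof n p.1 p.2).2 i := by
    intro i
    unfold abof
    constructor <;> dsimp only <;> split_ifs <;>
      first
        | exact le_refl _
        | exact hmono _ _ (by omega)
  have hkey : ∀ i, cof n p.1 p.2 (2 * (i + 1)) ≤ cof n p.1 p.2 (2 * i + 1) :=
    fun i => hmono _ _ (by omega)
  refine ⟨?_, ?_, ?_, ?_, ?_, ?_, ?_⟩
  · intro i
    calc (abof n p.1 p.2).1 (i + 1) ≤ cof n p.1 p.2 (2 * (i + 1)) := (hub (i + 1)).1
      _ ≤ cof n p.1 p.2 (2 * i + 1) := hkey i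
      _ ≤ (abof n p.1 p.2).1 i := (hlb i).1
  · intro i
    calc (abof n p.1 p.2).2 (i + 1) ≤ cof n p.1 p.2 (2 * (i + 1)) := (hub (i + 1)).2
      _ ≤ cof n p.1 p.2 (2 * i + 1) := hkey i
      _ ≤ (abof n p.1 p.2).2 i := (hlb i).2
  · intro i
    calc (abof n p.1 p.2).2 (i + 1) ≤ cof n p.1 p.2 (2 * (i + 1)) := (hub (i + 1)).2
      _ ≤ cof n p.1 p.2 (2 * i + 1) := hkey i
      _ ≤ (abof n p.1 p.2).1 i := (hlb i).1
  · intro i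
    calc (abof n p.1 p.2).1 (i + 1) ≤ cof n p.1 p.2 (2 * (i + 1)) := (hub (i + 1)).1
      _ ≤ cof n p.1 p.2 (2 * i + 1) := hkey i
      _ ≤ (abof n p.1 p.2).2 i := (hlb i).2
  · intro i hi
    unfold abof
    dsimp only
    split_ifs <;> · rw [cof, dif_neg (by omega)]
  · intro i hi
    unfold abof
    dsimp only
    split_ifs <;> · rw [cof, dif_neg (by omega)]
  · have e1 : ∑ i ∈ range n, ((abof n p.1 p.2).1 i + (abof n p.1 p.2).2 i) =
        ∑ i ∈ range n, (cof n p.1 p.2 (2 * i) + cof n p.1 p.2 (2 * i + 1)) := by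
      refine Finset.sum_congr rfl fun i _ => ?_
      unfold abof
      dsimp only
      split_ifs <;> omega
    rw [e1, ← sum_range_two_mul]
    have e2 : ∑ k ∈ range (2 * n), cof n p.1 p.2 k =
        ∑ k : Fin (2 * n), (p.2 k + addT p.1 (k : ℕ)) := by
      rw [← Fin.sum_univ_eq_sum_range]
      refine Finset.sum_congr rfl fun k _ => ?_
      rw [cof, dif_pos k.isLt]
    rw [e2, Finset.sum_add_distrib]
    have e3 : ∑ k : Fin (2 * n), addT p.1 (k : ℕ) = w p.1 := by
      rw [Fin.sum_univ_eq_sum_range]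
      exact sum_addT hS
    rw [e3]
    omega

end backward

/-! ### round trips -/

section roundtrip
variable {n N : ℕ}

lemma cof_Phi {ab : (ℕ → ℕ) × (ℕ → ℕ)} (h : ab ∈ cylSet n N) (k : ℕ) :
    cof n (Sof n ab) (vof n ab) k = cseq ab k := by
  by_cases hk : k < 2 * n
  · rw [cof, dif_pos hk]
    show cseq ab k - addT (Sof n ab) k + addT (Sof n ab) k = cseq ab k
    exact Nat.sub_add_cancel (addT_le_cseq h k)
  · rw [cof, dif_neg hk, cseq_eq_zero h k (by omega)]

lemma left_inv {ab : (ℕ → ℕ) × (ℕ → ℕ)} (h : ab ∈ cylSet n N) :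
    abof n (Sof n ab) (vof n ab) = ab := by
  obtain ⟨-, -, -, -, h5, h6, -⟩ := id h
  have hc := cof_Phi h
  apply Prod.ext
  · funext i
    show (if i ∈ Sof n ab then cof n (Sof n ab) (vof n ab) (2 * i + 1)
        else cof n (Sof n ab) (vof n ab) (2 * i)) = ab.1 i
    by_cases hi : i ∈ Sof n ab
    · rw [if_pos hi, hc, cseq_two_mul_add_one]
      exact min_eq_left (mem_Sof.mp hi).2.le
    · rw [if_neg hi, hc, cseq_two_mul]
      rcases Nat.lt_or_ge i n with hin | hin
      · have hnl : ¬ ab.1 i < ab.2 i := fun hcon => hi (mem_Sof.mpr ⟨hin, hcon⟩)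
        exact max_eq_left (not_lt.mp hnl)
      · rw [h5 i hin, h6 i hin]; exact max_self 0
  · funext i
    show (if i ∈ Sof n ab then cof n (Sof n ab) (vof n ab) (2 * i)
        else cof n (Sof n ab) (vof n ab) (2 * i + 1)) = ab.2 i
    by_cases hi : i ∈ Sof n ab
    · rw [if_pos hi, hc, cseq_two_mul]
      exact max_eq_right (mem_Sof.mp hi).2.le
    · rw [if_neg hi, hc, cseq_two_mul_add_one]
      rcases Nat.lt_or_ge i n with hin | hin
      · have hnl : ¬ ab.1 i < ab.2 i := fun hcon => hi (mem_Sof.mpr ⟨hin, hcon⟩)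
        exact min_eq_right (not_lt.mp hnl)
      · rw [h5 i hin, h6 i hin]; exact min_self 0

lemma Sof_Psi {p : Finset ℕ × (Fin (2 * n) → ℕ)} (hp : p ∈ QFinset n N) :
    Sof n (abof n p.1 p.2) = p.1 := by
  obtain ⟨hS, hd, -⟩ := mem_QFinset.mp hp
  ext i
  rw [mem_Sof]
  constructor
  · rintro ⟨hin, hlt⟩
    by_contra hi
    have e1 : (abof n p.1 p.2).1 i = cof n p.1 p.2 (2 * i) := by
      show (if i ∈ p.1 then _ else _) = _
      rw [if_neg hi]
    have e2 : (abof n p.1 p.2).2 i = cof n p.1 p.2 (2 * i + 1) := by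
      show (if i ∈ p.1 then _ else _) = _
      rw [if_neg hi]
    rw [e1, e2] at hlt
    exact absurd hlt (not_lt.mpr (cof_antitone hd _ _ (by omega)))
  · intro hi
    refine ⟨mem_range.mp (hS hi), ?_⟩
    have e1 : (abof n p.1 p.2).1 i = cof n p.1 p.2 (2 * i + 1) := by
      show (if i ∈ p.1 then _ else _) = _
      rw [if_pos hi]
    have e2 : (abof n p.1 p.2).2 i = cof n p.1 p.2 (2 * i) := by
      show (if i ∈ p.1 then _ else _) = _
      rw [if_pos hi]
    rw [e1, e2]
    exact cof_strict hd hS hi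

lemma right_inv {p : Finset ℕ × (Fin (2 * n) → ℕ)} (hp : p ∈ QFinset n N) :
    (Sof n (abof n p.1 p.2), vof n (abof n p.1 p.2)) = p := by
  obtain ⟨hS, hd, -⟩ := mem_QFinset.mp hp
  have hs := Sof_Psi hp
  have hcseq : ∀ k, k < 2 * n → cseq (abof n p.1 p.2) k = cof n p.1 p.2 k := by
    intro k hk
    obtain ⟨i, rfl | rfl⟩ : ∃ i, k = 2 * i ∨ k = 2 * i + 1 := ⟨k / 2, by omega⟩
    · rw [cseq_two_mul]
      by_cases hi : i ∈ p.1
      · have e1 : (abof n p.1 p.2).1 i = cof n p.1 p.2 (2 * i + 1) := by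
          show (if i ∈ p.1 then _ else _) = _; rw [if_pos hi]
        have e2 : (abof n p.1 p.2).2 i = cof n p.1 p.2 (2 * i) := by
          show (if i ∈ p.1 then _ else _) = _; rw [if_pos hi]
        rw [e1, e2]
        exact max_eq_right (cof_antitone hd _ _ (by omega))
      · have e1 : (abof n p.1 p.2).1 i = cof n p.1 p.2 (2 * i) := by
          show (if i ∈ p.1 then _ else _) = _; rw [if_neg hi]
        have e2 : (abof n p.1 p.2).2 i = cof n p.1 p.2 (2 * i + 1) := by
          show (if i ∈ p.1 then _ else _) = _; rw [if_neg hi]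
        rw [e1, e2]
        exact max_eq_left (cof_antitone hd _ _ (by omega))
    · rw [cseq_two_mul_add_one]
      by_cases hi : i ∈ p.1
      · have e1 : (abof n p.1 p.2).1 i = cof n p.1 p.2 (2 * i + 1) := by
          show (if i ∈ p.1 then _ else _) = _; rw [if_pos hi]
        have e2 : (abof n p.1 p.2).2 i = cof n p.1 p.2 (2 * i) := by
          show (if i ∈ p.1 then _ else _) = _; rw [if_pos hi]
        rw [e1, e2]
        exact min_eq_left (cof_antitone hd _ _ (by omega))
      · have e1 : (abof n p.1 p.2).1 i = cof n p.1 p.2 (2 * i) := by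
          show (if i ∈ p.1 then _ else _) = _; rw [if_neg hi]
        have e2 : (abof n p.1 p.2).2 i = cof n p.1 p.2 (2 * i + 1) := by
          show (if i ∈ p.1 then _ else _) = _; rw [if_neg hi]
        rw [e1, e2]
        exact min_eq_right (cof_antitone hd _ _ (by omega))
  refine Prod.ext hs ?_
  funext j
  show cseq (abof n p.1 p.2) (j : ℕ) - addT (Sof n (abof n p.1 p.2)) (j : ℕ) = p.2 j
  rw [hs, hcseq j j.isLt, cof, dif_pos j.isLt, Fin.eta]
  omega

end roundtrip

lemma ncard_eq (n N : ℕ) : (cylSet n N).ncard = (QFinset n N).card := by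
  rw [← Set.ncard_coe_finset]
  apply Set.ncard_congr (fun ab _ => (Sof n ab, vof n ab))
  · intro ab hab
    rw [Finset.mem_coe]
    exact forward_mem hab
  · intro a b ha hb hfeq
    have := congrArg (fun p : Finset ℕ × (Fin (2 * n) → ℕ) => abof n p.1 p.2) hfeq
    dsimp only at this
    rwa [left_inv ha, left_inv hb] at this
  · intro p hp
    rw [Finset.mem_coe] at hp
    exact ⟨abof n p.1 p.2, backward_mem hp, right_inv hp⟩


end CylAux

open PowerSeries

/-- The generating function for cylindric partitions with profile `(1,1)` with at most `n`
parts in each row equals `(-q;q²)_n / (q;q)_{2n}`.  A cylindric partition with profile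
`(1,1)` is a pair of weakly decreasing sequences `a, b` of nonnegative integers, supported
on the first `n` indices, with `a i ≥ b (i+1)` and `b i ≥ a (i+1)` for all `i`. -/
theorem stmt3 (n : ℕ) :
    (PowerSeries.mk fun N : ℕ =>
        (Set.ncard {ab : (ℕ → ℕ) × (ℕ → ℕ) |
            (∀ i, ab.1 (i + 1) ≤ ab.1 i) ∧ (∀ i, ab.2 (i + 1) ≤ ab.2 i) ∧
            (∀ i, ab.2 (i + 1) ≤ ab.1 i) ∧ (∀ i, ab.1 (i + 1) ≤ ab.2 i) ∧
            (∀ i, n ≤ i → ab.1 i = 0) ∧ (∀ i, n ≤ i → ab.2 i = 0) ∧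
            (∑ i ∈ Finset.range n, (ab.1 i + ab.2 i)) = N} : ℚ)) =
      (∏ j ∈ Finset.range n, (1 + (PowerSeries.X : PowerSeries ℚ) ^ (2 * j + 1))) *
        (∏ j ∈ Finset.range (2 * n), (1 - (PowerSeries.X : PowerSeries ℚ) ^ (j + 1)))⁻¹ := by
  rw [CylAux.A_eq, CylAux.B_inv']
  have hmul : (PowerSeries.mk fun N => ((CylAux.subFinset n N).card : ℚ)) *
      (PowerSeries.mk fun N => ((CylAux.parFinset (2 * n) N).card : ℚ)) =
      PowerSeries.mk fun N => ((CylAux.QFinset n N).card : ℚ) := by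
    ext N
    rw [PowerSeries.coeff_mul, coeff_mk, CylAux.QFinset_card]
    push_cast
    exact Finset.sum_congr rfl fun p _ => by rw [coeff_mk, coeff_mk]
  rw [hmul]
  ext N
  rw [coeff_mk, coeff_mk]
  norm_cast
  exact CylAux.ncard_eq n N
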